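/- Let U be an admissible function on [0,∞) (continuous, strictly increasing, U(0)=0, U(∞)=∞), and let w be a nonnegative measurable function on (0,∞). Define φ(t) = U(t) ∫_0^∞ w(τ)/(U(τ)+U(t)) dτ. If ∫_0^∞ w(τ)/(U(τ)+U(t)) dτ < ∞ for all t > 0, ∫_0^1 w(τ)/U(τ) dτ = ∞, and ∫_1^∞ w(τ) dτ = ∞, then φ is non-degenerate: lim_{t→0+} φ(t) = 0, lim_{t→∞} 1/φ(t) = 0, lim_{t→∞} φ(t)/U(t) = 0, and lim_{t→0+} U(t)/φ(t) = 0. -/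

import Mathlib

open MeasureTheory ENNReal Set Filter
open scoped Topology

noncomputable def fundFun (U : ℝ → ℝ) (w : ℝ → ℝ≥0∞) (t : ℝ) : ℝ≥0∞ :=
  ENNReal.ofReal (U t) * ∫⁻ τ in Ioi (0 : ℝ),
    w τ / (ENNReal.ofReal (U τ) + ENNReal.ofReal (U t))

namespace Stmt14Aux

lemma ratio_mono {a b c : ℝ≥0∞} (hab : a ≤ b) (hc0 : c ≠ 0) (hc : c ≠ ⊤) (hb : b ≠ ⊤) :
    a / (c + a) ≤ b / (c + b) := by
  have ha : a ≠ ⊤ := fun h => hb (top_le_iff.mp (h ▸ hab))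
  have hca0 : c + a ≠ 0 := by simp [hc0]
  have hcat : c + a ≠ ⊤ := ENNReal.add_ne_top.2 ⟨hc, ha⟩
  have hcb0 : c + b ≠ 0 := by simp [hc0]
  have hcbt : c + b ≠ ⊤ := ENNReal.add_ne_top.2 ⟨hc, hb⟩
  calc a / (c + a) = a * (c + b) / ((c + a) * (c + b)) :=
        (ENNReal.mul_div_mul_right _ _ hcb0 hcbt).symm
    _ ≤ b * (c + a) / ((c + a) * (c + b)) := by
        apply ENNReal.div_le_div_right
        calc a * (c + b) = a * c + a * b := by ring
          _ ≤ b * c + b * a := add_le_add (mul_le_mul_left hab _) (by rw [mul_comm])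
          _ = b * (c + a) := by ring
    _ = b / (c + b) := by
        rw [mul_comm (c + a) (c + b)]
        exact ENNReal.mul_div_mul_right _ _ hca0 hcat

lemma ratio_half {c d : ℝ≥0∞} (hc0 : c ≠ 0) (hc : c ≠ ⊤) (hdc : d ≤ c) :
    2⁻¹ ≤ c / (d + c) := by
  have hd : d ≠ ⊤ := (hdc.trans_lt hc.lt_top).ne
  rw [ENNReal.le_div_iff_mul_le (Or.inl (by simp [hc0]))
    (Or.inl (ENNReal.add_ne_top.2 ⟨hd, hc⟩))]
  calc (2 : ℝ≥0∞)⁻¹ * (d + c) ≤ 2⁻¹ * (c + c) := by gcongr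
    _ = c := by
        rw [← two_mul, ← mul_assoc, ENNReal.inv_mul_cancel (by norm_num) (by norm_num), one_mul]

lemma div_mul_right_inv {a b : ℝ≥0∞} (ha0 : a ≠ 0) (ha : a ≠ ⊤) : a / (a * b) = b⁻¹ := by
  rw [div_eq_mul_inv, ENNReal.mul_inv (Or.inl ha0) (Or.inl ha), ← mul_assoc,
    ENNReal.mul_inv_cancel ha0 ha, one_mul]

end Stmt14Aux

open Stmt14Aux

theorem stmt14 (U : ℝ → ℝ)
    (hUcont : ContinuousOn U (Ici (0 : ℝ))) (hUmono : StrictMonoOn U (Ici (0 : ℝ)))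
    (hU0 : U 0 = 0) (hUtop : Tendsto U atTop atTop)
    (w : ℝ → ℝ≥0∞) (hw : Measurable w)
    (hfin : ∀ t : ℝ, 0 < t →
      (∫⁻ τ in Ioi (0 : ℝ), w τ / (ENNReal.ofReal (U τ) + ENNReal.ofReal (U t))) < ∞)
    (h01 : (∫⁻ τ in Ioo (0 : ℝ) 1, w τ / ENNReal.ofReal (U τ)) = ∞)
    (h1top : (∫⁻ τ in Ioi (1 : ℝ), w τ) = ∞) :
    Tendsto (fundFun U w) (nhdsWithin 0 (Ioi (0 : ℝ))) (nhds 0) ∧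
    Tendsto (fun t => (fundFun U w t)⁻¹) atTop (nhds 0) ∧
    Tendsto (fun t => fundFun U w t / ENNReal.ofReal (U t)) atTop (nhds 0) ∧
    Tendsto (fun t => ENNReal.ofReal (U t) / fundFun U w t)
      (nhdsWithin 0 (Ioi (0 : ℝ))) (nhds 0) := by
  set μ := volume.restrict (Ioi (0 : ℝ)) with hμ
  -- basic facts about U
  have hUmonoOn : MonotoneOn U (Ici (0 : ℝ)) := hUmono.monotoneOn
  have hUpos : ∀ t : ℝ, 0 < t → 0 < U t := by
    intro t ht
    have := hUmono (mem_Ici.2 le_rfl) (mem_Ici.2 ht.le) ht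
    simpa [hU0] using this
  have hUle : ∀ s t : ℝ, 0 ≤ s → s ≤ t → U s ≤ U t := fun s t hs hst =>
    hUmonoOn (mem_Ici.2 hs) (mem_Ici.2 (hs.trans hst)) hst
  have hc0 : ∀ t : ℝ, 0 < t → ENNReal.ofReal (U t) ≠ 0 := fun t ht => by
    simp [ENNReal.ofReal_eq_zero, not_le, hUpos t ht]
  -- abbreviation
  set I : ℝ → ℝ≥0∞ := fun t => ∫⁻ τ in Ioi (0 : ℝ),
    w τ / (ENNReal.ofReal (U τ) + ENNReal.ofReal (U t)) with hI
  have hfund : ∀ t, fundFun U w t = ENNReal.ofReal (U t) * I t := fun t => rfl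
  -- measurability
  have hUm : AEMeasurable (fun τ => ENNReal.ofReal (U τ)) μ :=
    ENNReal.measurable_ofReal.comp_aemeasurable
      ((hUcont.mono Ioi_subset_Ici_self).aemeasurable measurableSet_Ioi)
  have hFm : ∀ t : ℝ, AEMeasurable
      (fun τ => w τ / (ENNReal.ofReal (U τ) + ENNReal.ofReal (U t))) μ := fun t =>
    hw.aemeasurable.div (hUm.add aemeasurable_const)
  have hGm : ∀ t : ℝ, AEMeasurable
      (fun τ => w τ * (ENNReal.ofReal (U t) /
        (ENNReal.ofReal (U τ) + ENNReal.ofReal (U t)))) μ := fun t =>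
    hw.aemeasurable.mul (aemeasurable_const.div (hUm.add aemeasurable_const))
  -- rewriting fundFun as an integral
  have hphi : ∀ t : ℝ, fundFun U w t = ∫⁻ τ in Ioi (0 : ℝ),
      w τ * (ENNReal.ofReal (U t) / (ENNReal.ofReal (U τ) + ENNReal.ofReal (U t))) := by
    intro t
    rw [fundFun, ← lintegral_const_mul' _ _ ENNReal.ofReal_ne_top]
    exact lintegral_congr fun τ => by
      simp only [div_eq_mul_inv]; ring
  -- monotonicity of fundFun on positives
  have hphimono : ∀ s t : ℝ, 0 < s → s ≤ t → fundFun U w s ≤ fundFun U w t := by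
    intro s t hs hst
    rw [hphi s, hphi t]
    refine lintegral_mono_ae ?_
    filter_upwards [ae_restrict_mem measurableSet_Ioi] with τ hτ
    exact mul_le_mul_right
      (ratio_mono (ENNReal.ofReal_le_ofReal (hUle s t hs.le hst))
        (hc0 τ hτ) ENNReal.ofReal_ne_top ENNReal.ofReal_ne_top) _
  -- antitonicity of I
  have hIanti : ∀ s t : ℝ, 0 ≤ s → s ≤ t → I t ≤ I s := by
    intro s t hs hst
    refine lintegral_mono fun τ => ?_
    exact ENNReal.div_le_div le_rfl
      (add_le_add le_rfl (ENNReal.ofReal_le_ofReal (hUle s t hs hst)))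
  -- w is a.e. finite
  have hwfin : ∀ᵐ τ ∂μ, w τ < ⊤ := by
    have hae : ∀ᵐ τ ∂μ,
        w τ / (ENNReal.ofReal (U τ) + ENNReal.ofReal (U 1)) < ⊤ :=
      ae_lt_top' (hFm 1) (hfin 1 one_pos).ne
    filter_upwards [hae] with τ hτ
    by_contra h
    rw [not_lt, top_le_iff] at h
    rw [h, ENNReal.top_div_of_ne_top (ENNReal.add_ne_top.2
      ⟨ENNReal.ofReal_ne_top, ENNReal.ofReal_ne_top⟩)] at hτ
    exact absurd hτ (lt_irrefl _)
  -- sequences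
  have hseqpos : ∀ n : ℕ, (0 : ℝ) < 1 / (n + 1) := fun n => by positivity
  have hseq0 : Tendsto (fun n : ℕ => (1 : ℝ) / (n + 1)) atTop (𝓝 0) :=
    tendsto_one_div_add_atTop_nhds_zero_nat
  have hUseq0 : Tendsto (fun n : ℕ => U (1 / (n + 1))) atTop (𝓝 0) := by
    have hcont0 : Tendsto U (nhdsWithin 0 (Ici (0 : ℝ))) (𝓝 (U 0)) := hUcont 0 (mem_Ici.2 le_rfl)
    rw [← hU0]
    refine hcont0.comp ?_
    rw [tendsto_nhdsWithin_iff]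
    exact ⟨hseq0, Eventually.of_forall fun n => (hseqpos n).le⟩
  have hcseq0 : Tendsto (fun n : ℕ => ENNReal.ofReal (U (1 / (n + 1)))) atTop (𝓝 0) := by
    have := (ENNReal.continuous_ofReal.tendsto 0).comp hUseq0
    simpa [Function.comp_def] using this
  have hcseqanti : Antitone (fun n : ℕ => ENNReal.ofReal (U (1 / (n + 1)))) := by
    intro n m hnm
    refine ENNReal.ofReal_le_ofReal (hUle _ _ (hseqpos m).le ?_)
    apply one_div_le_one_div_of_le (by positivity)
    exact_mod_cast Nat.add_le_add_right hnm 1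
  have hUseqtop : Tendsto (fun n : ℕ => U ((n : ℝ) + 1)) atTop atTop :=
    hUtop.comp (tendsto_atTop_add_const_right atTop 1 tendsto_natCast_atTop_atTop)
  have hcseqtop : Tendsto (fun n : ℕ => ENNReal.ofReal (U ((n : ℝ) + 1))) atTop (𝓝 ⊤) :=
    ENNReal.tendsto_ofReal_atTop.comp hUseqtop
  -- (b) I tends to ⊤ at 0⁺
  have hItop : Tendsto I (nhdsWithin 0 (Ioi (0 : ℝ))) (𝓝 ⊤) := by
    have hgmono : ∀ τ : ℝ, Monotone fun n : ℕ =>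
        w τ / (ENNReal.ofReal (U τ) + ENNReal.ofReal (U (1 / (n + 1)))) := by
      intro τ n m hnm
      exact ENNReal.div_le_div le_rfl (add_le_add le_rfl (hcseqanti hnm))
    have hiInfc : (⨅ n : ℕ, ENNReal.ofReal (U (1 / (n + 1)))) = 0 :=
      tendsto_nhds_unique (tendsto_atTop_iInf hcseqanti) hcseq0
    have key : (⨆ n : ℕ, I (1 / (n + 1))) = ⊤ := by
      have hMCT := lintegral_iSup' (μ := μ)
        (f := fun n τ => w τ / (ENNReal.ofReal (U τ) + ENNReal.ofReal (U (1 / (n + 1)))))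
        (fun n => hFm _) (ae_of_all _ hgmono)
      rw [hI]
      rw [← hMCT]
      have hpt : ∀ τ ∈ Ioi (0 : ℝ),
          (⨆ n : ℕ, w τ / (ENNReal.ofReal (U τ) + ENNReal.ofReal (U (1 / (n + 1)))))
            = w τ / ENNReal.ofReal (U τ) := by
        intro τ hτ
        calc (⨆ n : ℕ, w τ / (ENNReal.ofReal (U τ) + ENNReal.ofReal (U (1 / (n + 1)))))
            = ⨆ n : ℕ, w τ * (ENNReal.ofReal (U τ) + ENNReal.ofReal (U (1 / (n + 1))))⁻¹ := by
              simp only [div_eq_mul_inv]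
          _ = w τ * ⨆ n : ℕ,
              (ENNReal.ofReal (U τ) + ENNReal.ofReal (U (1 / (n + 1))))⁻¹ :=
              (ENNReal.mul_iSup _ _).symm
          _ = w τ * (⨅ n : ℕ,
              (ENNReal.ofReal (U τ) + ENNReal.ofReal (U (1 / (n + 1)))))⁻¹ := by
              rw [ENNReal.inv_iInf]
          _ = w τ / ENNReal.ofReal (U τ) := by
              rw [← ENNReal.add_iInf, hiInfc, add_zero, div_eq_mul_inv]
      rw [eq_top_iff, ← h01]
      calc ∫⁻ τ in Ioo (0 : ℝ) 1, w τ / ENNReal.ofReal (U τ)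
          ≤ ∫⁻ τ in Ioi (0 : ℝ), w τ / ENNReal.ofReal (U τ) :=
            lintegral_mono_set Ioo_subset_Ioi_self
        _ = ∫⁻ τ in Ioi (0 : ℝ),
            ⨆ n : ℕ, w τ / (ENNReal.ofReal (U τ) + ENNReal.ofReal (U (1 / (n + 1)))) := by
            refine lintegral_congr_ae ?_
            filter_upwards [ae_restrict_mem measurableSet_Ioi] with τ hτ
            exact (hpt τ hτ).symm
    rw [ENNReal.tendsto_nhds_top_iff_nnreal]
    intro r
    have hlt : (r : ℝ≥0∞) < ⨆ n : ℕ, I (1 / (n + 1)) := key ▸ coe_lt_top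
    obtain ⟨n, hn⟩ := lt_iSup_iff.mp hlt
    have hmem : Ioo (0 : ℝ) (1 / (n + 1)) ∈ nhdsWithin 0 (Ioi (0 : ℝ)) :=
      Ioo_mem_nhdsGT (hseqpos n)
    filter_upwards [hmem] with t ht
    exact hn.trans_le (hIanti t (1 / (n + 1)) ht.1.le ht.2.le)
  -- (a) I tends to 0 at ⊤
  have hI0 : Tendsto I atTop (𝓝 0) := by
    have hseq : Tendsto (fun n : ℕ => I ((n : ℝ) + 1)) atTop (𝓝 0) := by
      have hDCT := tendsto_lintegral_of_dominated_convergence' (μ := μ)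
        (F := fun n τ => w τ / (ENNReal.ofReal (U τ) + ENNReal.ofReal (U ((n : ℝ) + 1))))
        (f := fun _ => 0)
        (bound := fun τ => w τ / (ENNReal.ofReal (U τ) + ENNReal.ofReal (U 1)))
        (fun n => hFm _)
        (fun n => ae_of_all _ fun τ => ENNReal.div_le_div le_rfl
          (add_le_add le_rfl (ENNReal.ofReal_le_ofReal
            (hUle 1 ((n : ℝ) + 1) zero_le_one (by exact_mod_cast le_add_of_nonneg_left n.cast_nonneg)))))
        (hfin 1 one_pos).ne
        ?_
      · simpa using hDCT
      · filter_upwards [hwfin] with τ hτ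
        have hd : Tendsto (fun n : ℕ =>
            ENNReal.ofReal (U τ) + ENNReal.ofReal (U ((n : ℝ) + 1))) atTop (𝓝 ⊤) := by
          have := hcseqtop.const_add (ENNReal.ofReal (U τ))
          simpa using this
        have hinv : Tendsto (fun n : ℕ =>
            (ENNReal.ofReal (U τ) + ENNReal.ofReal (U ((n : ℝ) + 1)))⁻¹) atTop (𝓝 0) := by
          have := ENNReal.tendsto_inv_iff.2 hd
          simpa using this
        have := ENNReal.Tendsto.const_mul (a := w τ) hinv (Or.inr hτ.ne)
        simpa [div_eq_mul_inv] using this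
    rw [ENNReal.tendsto_nhds_zero]
    intro ε hε
    obtain ⟨n, hn⟩ := (ENNReal.tendsto_nhds_zero.mp hseq ε hε).exists
    filter_upwards [eventually_ge_atTop ((n : ℝ) + 1)] with t ht
    exact (hIanti ((n : ℝ) + 1) t (by positivity) ht).trans hn
  -- (d) fundFun tends to ⊤ at ⊤
  have hphitop : Tendsto (fundFun U w) atTop (𝓝 ⊤) := by
    have hFmono : ∀ᵐ τ ∂μ, Monotone fun n : ℕ =>
        w τ * (ENNReal.ofReal (U ((n : ℝ) + 1)) /
          (ENNReal.ofReal (U τ) + ENNReal.ofReal (U ((n : ℝ) + 1)))) := by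
      filter_upwards [ae_restrict_mem measurableSet_Ioi] with τ hτ
      intro n m hnm
      refine mul_le_mul_right (ratio_mono (ENNReal.ofReal_le_ofReal
        (hUle _ _ (by positivity) (by exact_mod_cast Nat.add_le_add_right hnm 1)))
        (hc0 τ hτ) ENNReal.ofReal_ne_top ENNReal.ofReal_ne_top) _
    have key2 : (⨆ n : ℕ, fundFun U w ((n : ℝ) + 1)) = ⊤ := by
      have hMCT := lintegral_iSup' (μ := μ)
        (f := fun n τ => w τ * (ENNReal.ofReal (U ((n : ℝ) + 1)) /
          (ENNReal.ofReal (U τ) + ENNReal.ofReal (U ((n : ℝ) + 1)))))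
        (fun n => hGm _) hFmono
      have : (⨆ n : ℕ, fundFun U w ((n : ℝ) + 1)) = ∫⁻ τ in Ioi (0 : ℝ),
          ⨆ n : ℕ, w τ * (ENNReal.ofReal (U ((n : ℝ) + 1)) /
            (ENNReal.ofReal (U τ) + ENNReal.ofReal (U ((n : ℝ) + 1)))) := by
        rw [hMCT]
        exact iSup_congr fun n => by rw [hphi]
      rw [this, eq_top_iff]
      have hhalf : ∀ τ ∈ Ioi (0 : ℝ), w τ * 2⁻¹ ≤
          ⨆ n : ℕ, w τ * (ENNReal.ofReal (U ((n : ℝ) + 1)) /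
            (ENNReal.ofReal (U τ) + ENNReal.ofReal (U ((n : ℝ) + 1)))) := by
        intro τ hτ
        obtain ⟨n, hn⟩ := (hUseqtop.eventually_ge_atTop (U τ)).exists
        refine le_trans ?_ (le_iSup _ n)
        refine mul_le_mul_right (ratio_half (hc0 _ (by positivity))
          ENNReal.ofReal_ne_top (ENNReal.ofReal_le_ofReal hn)) _
      calc (⊤ : ℝ≥0∞) = (∫⁻ τ in Ioi (1 : ℝ), w τ) * 2⁻¹ := by
            rw [h1top, ENNReal.top_mul (by norm_num)]
        _ = ∫⁻ τ in Ioi (1 : ℝ), w τ * 2⁻¹ :=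
            (lintegral_mul_const' _ _ (by norm_num)).symm
        _ ≤ ∫⁻ τ in Ioi (0 : ℝ), w τ * 2⁻¹ :=
            lintegral_mono_set (Ioi_subset_Ioi zero_le_one)
        _ ≤ _ := by
            refine lintegral_mono_ae ?_
            filter_upwards [ae_restrict_mem measurableSet_Ioi] with τ hτ
            exact hhalf τ hτ
    rw [ENNReal.tendsto_nhds_top_iff_nnreal]
    intro r
    have hlt : (r : ℝ≥0∞) < ⨆ n : ℕ, fundFun U w ((n : ℝ) + 1) := key2 ▸ coe_lt_top
    obtain ⟨n, hn⟩ := lt_iSup_iff.mp hlt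
    filter_upwards [eventually_ge_atTop ((n : ℝ) + 1)] with t ht
    exact hn.trans_le (hphimono ((n : ℝ) + 1) t (by positivity) ht)
  -- (c) fundFun tends to 0 at 0⁺
  have hphi0 : Tendsto (fundFun U w) (nhdsWithin 0 (Ioi (0 : ℝ))) (𝓝 0) := by
    have hseq : Tendsto (fun n : ℕ => fundFun U w (1 / (n + 1))) atTop (𝓝 0) := by
      have hDCT := tendsto_lintegral_of_dominated_convergence' (μ := μ)
        (F := fun n τ => w τ * (ENNReal.ofReal (U (1 / (n + 1))) /
          (ENNReal.ofReal (U τ) + ENNReal.ofReal (U (1 / (n + 1))))))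
        (f := fun _ => 0)
        (bound := fun τ => w τ * (ENNReal.ofReal (U 1) /
          (ENNReal.ofReal (U τ) + ENNReal.ofReal (U 1))))
        (fun n => hGm _)
        ?_ ?_ ?_
      · simp only [lintegral_zero] at hDCT
        exact hDCT.congr fun n => (hphi (1 / (n + 1))).symm
      · intro n
        filter_upwards [ae_restrict_mem measurableSet_Ioi] with τ hτ
        refine mul_le_mul_right (ratio_mono (ENNReal.ofReal_le_ofReal
          (hUle _ _ (hseqpos n).le ?_)) (hc0 τ hτ)
          ENNReal.ofReal_ne_top ENNReal.ofReal_ne_top) _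
        rw [div_le_one (by positivity)]
        exact le_add_of_nonneg_left n.cast_nonneg
      · rw [← hphi 1]
        exact ENNReal.mul_ne_top ENNReal.ofReal_ne_top (hfin 1 one_pos).ne
      · filter_upwards [hwfin, ae_restrict_mem measurableSet_Ioi] with τ hτ hτpos
        have hden : Tendsto (fun n : ℕ =>
            ENNReal.ofReal (U τ) + ENNReal.ofReal (U (1 / (n + 1)))) atTop
            (𝓝 (ENNReal.ofReal (U τ))) := by
          have := hcseq0.const_add (ENNReal.ofReal (U τ))
          simpa using this
        have hinv : Tendsto (fun n : ℕ =>
            (ENNReal.ofReal (U τ) + ENNReal.ofReal (U (1 / (n + 1))))⁻¹) atTop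
            (𝓝 (ENNReal.ofReal (U τ))⁻¹) := ENNReal.tendsto_inv_iff.2 hden
        have hratio : Tendsto (fun n : ℕ =>
            ENNReal.ofReal (U (1 / (n + 1))) *
              (ENNReal.ofReal (U τ) + ENNReal.ofReal (U (1 / (n + 1))))⁻¹) atTop (𝓝 0) := by
          have := ENNReal.Tendsto.mul hcseq0
            (Or.inr (ENNReal.inv_ne_top.2 (hc0 τ hτpos))) hinv (Or.inr ENNReal.zero_ne_top)
          simpa using this
        have := ENNReal.Tendsto.const_mul (a := w τ) hratio (Or.inr hτ.ne)
        simpa [div_eq_mul_inv] using this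
    rw [ENNReal.tendsto_nhds_zero]
    intro ε hε
    obtain ⟨n, hn⟩ := (ENNReal.tendsto_nhds_zero.mp hseq ε hε).exists
    have hmem : Ioo (0 : ℝ) (1 / (n + 1)) ∈ nhdsWithin 0 (Ioi (0 : ℝ)) :=
      Ioo_mem_nhdsGT (hseqpos n)
    filter_upwards [hmem] with t ht
    exact (hphimono t (1 / (n + 1)) ht.1 ht.2.le).trans hn
  refine ⟨hphi0, ?_, ?_, ?_⟩
  · have := ENNReal.tendsto_inv_iff.2 hphitop
    simpa using this
  · refine hI0.congr' ?_
    filter_upwards [eventually_ge_atTop (1 : ℝ)] with t ht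
    have ht0 : (0 : ℝ) < t := lt_of_lt_of_le one_pos ht
    rw [hfund t, mul_comm, mul_div_assoc,
      ENNReal.div_self (hc0 t ht0) ENNReal.ofReal_ne_top, mul_one]
  · have hIinv : Tendsto (fun t => (I t)⁻¹) (nhdsWithin 0 (Ioi (0 : ℝ))) (𝓝 0) := by
      have := ENNReal.tendsto_inv_iff.2 hItop
      simpa using this
    refine hIinv.congr' ?_
    filter_upwards [self_mem_nhdsWithin] with t ht
    rw [hfund t, div_mul_right_inv (hc0 t ht) ENNReal.ofReal_ne_top]
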